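/- Let n be a positive integer and let y_1 ≥ y_2 ≥ ⋯ ≥ y_n ≥ 0 be real numbers. Let Z_1, …, Z_n be independent random variables each uniformly distributed on {−1, +1}. Then E[max_{i∈[n]} Z_i · y_i] = Σ_{k=1}^{n−1} 2^{−k} · y_k (the empty sum being 0 when n = 1). -/

import Mathlib

open MeasureTheory ProbabilityTheory
open scoped ENNReal

/-- For `y 0 ≥ y 1 ≥ ⋯ ≥ y (n-1) ≥ 0` and independent Rademacher signs `Z i` (uniform on
`{-1, 1}`), the expected maximum of `Z i * y i` equals `∑_{k=1}^{n-1} 2^{-k} y k`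
(with `y` 1-indexed in the informal statement; here `Fin.castLE` re-indexes). -/
theorem expected_max_rademacher
    (n : ℕ) (hn : 0 < n)
    (Ω : Type) [MeasurableSpace Ω] (P : Measure Ω) [IsProbabilityMeasure P]
    (y : Fin n → ℝ) (hy : Antitone y) (hy0 : ∀ i, 0 ≤ y i)
    (Z : Fin n → Ω → ℝ) (hmeas : ∀ i, Measurable (Z i))
    (hindep : iIndepFun Z P)
    (hZ : ∀ i, Measure.map (Z i) P =
      (2 : ℝ≥0∞)⁻¹ • Measure.dirac (-1 : ℝ) + (2 : ℝ≥0∞)⁻¹ • Measure.dirac (1 : ℝ)) :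
    (∫ ω, ⨆ i, Z i ω * y i ∂P) =
      ∑ k : Fin (n - 1), (2 : ℝ) ^ (-((k : ℕ) : ℤ) - 1) * y (Fin.castLE (Nat.sub_le n 1) k) := by
  obtain ⟨m, rfl⟩ : ∃ m, n = m + 1 := ⟨n - 1, (Nat.succ_pred_eq_of_pos hn).symm⟩
  -- marginal probabilities
  have hmem : ∀ i (s : Set ℝ), MeasurableSet s →
      P (Z i ⁻¹' s) = 2⁻¹ * s.indicator 1 (-1) + 2⁻¹ * s.indicator 1 1 := by
    intro i s hs
    rw [← Measure.map_apply (hmeas i) hs, hZ i]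
    simp [Measure.add_apply, Measure.smul_apply, smul_eq_mul, Measure.dirac_apply' _ hs]
  have hP1 : ∀ i, P (Z i ⁻¹' {1}) = 2⁻¹ := by
    intro i
    rw [hmem i _ (measurableSet_singleton _)]
    norm_num
  have hPneg : ∀ i, P (Z i ⁻¹' {-1}) = 2⁻¹ := by
    intro i
    rw [hmem i _ (measurableSet_singleton _)]
    norm_num
  have hms : MeasurableSet ({-1, 1} : Set ℝ) :=
    (measurableSet_singleton (1 : ℝ)).insert (-1)
  have hPboth : ∀ i, P (Z i ⁻¹' {-1, 1}) = 1 := by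
    intro i
    rw [hmem i _ hms]
    rw [Set.indicator_of_mem (by norm_num) 1, Set.indicator_of_mem (by norm_num) 1]
    simp [ENNReal.inv_two_add_inv_two]
  -- a.e. each Z i is a sign
  have hgood : ∀ᵐ ω ∂P, ∀ i, Z i ω = -1 ∨ Z i ω = 1 := by
    rw [ae_all_iff]
    intro i
    have h1 : P ((Z i ⁻¹' {-1, 1})ᶜ) = 0 := by
      rw [measure_compl ((hmeas i) hms) (measure_ne_top _ _), hPboth i, measure_univ, tsub_self]
    refine ae_iff.2 (measure_mono_null ?_ h1)
    intro ω hω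
    simp only [Set.mem_setOf_eq] at hω
    simp only [Set.mem_compl_iff, Set.mem_preimage, Set.mem_insert_iff, Set.mem_singleton_iff]
    exact hω
  classical
  -- events
  set S : Fin (m+1) → Fin (m+1) → Set ℝ :=
    fun k i => if i = k then ({1} : Set ℝ) else {-1} with hS
  set A : Fin (m+1) → Set Ω := fun k => ⋂ i ∈ Finset.Iic k, Z i ⁻¹' (S k i) with hA
  set B : Set Ω := ⋂ i ∈ (Finset.univ : Finset (Fin (m+1))), Z i ⁻¹' {-1} with hB
  have hSmeas : ∀ k i, MeasurableSet (S k i) := by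
    intro k i
    by_cases h : i = k <;> simp [hS, h]
  have hAmeas : ∀ k, MeasurableSet (A k) :=
    fun k => Finset.measurableSet_biInter _ (fun i _ => (hmeas i) (hSmeas k i))
  have hBmeas : MeasurableSet B :=
    Finset.measurableSet_biInter _ (fun i _ => (hmeas i) (measurableSet_singleton _))
  have hindep' := hindep.measure_inter_preimage_eq_mul
  have hPA : ∀ k, P (A k) = 2⁻¹ ^ ((k : ℕ) + 1) := by
    intro k
    rw [hA, hindep' (Finset.Iic k) (fun i _ => hSmeas k i)]
    have hfac : ∀ i ∈ Finset.Iic k, P (Z i ⁻¹' (S k i)) = 2⁻¹ := by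
      intro i _
      by_cases h : i = k
      · subst h; rw [show S i i = {1} by simp [hS]]; exact hP1 i
      · rw [show S k i = {-1} by simp [hS, h]]; exact hPneg i
    rw [Finset.prod_congr rfl hfac, Finset.prod_const, Fin.card_Iic]
  have hPB : P B = 2⁻¹ ^ (m + 1) := by
    rw [hB, hindep' Finset.univ (fun i _ => measurableSet_singleton _)]
    rw [Finset.prod_congr rfl (fun i _ => hPneg i), Finset.prod_const]
    simp
  -- membership descriptions
  have hAmem : ∀ k ω, ω ∈ A k ↔ Z k ω = 1 ∧ ∀ j < k, Z j ω = -1 := by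
    intro k ω
    simp only [hA, Set.mem_iInter, Finset.mem_Iic, Set.mem_preimage]
    constructor
    · intro h
      refine ⟨?_, fun j hj => ?_⟩
      · have := h k le_rfl; simpa [hS] using this
      · have := h j hj.le; simpa [hS, ne_of_lt hj] using this
    · rintro ⟨h1, h2⟩ i hi
      rcases eq_or_lt_of_le hi with h | h
      · simp [hS, h, h1]
      · simp [hS, ne_of_lt h, h2 i h]
  have hBmem : ∀ ω, ω ∈ B ↔ ∀ j, Z j ω = -1 := by
    intro ω
    simp [hB]
  -- the simple function
  set f : Ω → ℝ := fun ω =>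
    (∑ k, (A k).indicator (fun _ => y k) ω) + B.indicator (fun _ => -(y (Fin.last m))) ω with hf
  have hae : (fun ω => ⨆ i, Z i ω * y i) =ᵐ[P] f := by
    filter_upwards [hgood] with ω hω
    have hbdd : BddAbove (Set.range fun i => Z i ω * y i) :=
      Set.Finite.bddAbove (Set.finite_range _)
    by_cases hall : ∀ j, Z j ω = -1
    · -- ω ∈ B, not in any A k
      have hsup : (⨆ i, Z i ω * y i) = -(y (Fin.last m)) := by
        apply le_antisymm
        · refine ciSup_le fun i => ?_
          rw [hall i]
          simp only [neg_one_mul, neg_le_neg_iff]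
          exact hy (Fin.le_last i)
        · have := le_ciSup hbdd (Fin.last m)
          rwa [hall (Fin.last m), neg_one_mul] at this
      have hnA : ∀ k, ω ∉ A k := by
        intro k hk
        have := ((hAmem k ω).1 hk).1
        rw [hall k] at this; norm_num at this
      rw [hsup]
      simp only [hf]
      rw [Finset.sum_eq_zero (fun k _ => Set.indicator_of_notMem (hnA k) _),
        Set.indicator_of_mem ((hBmem ω).2 hall), zero_add]
    · -- least index with Z = 1
      push_neg at hall
      have hne : (Finset.univ.filter (fun i => Z i ω = 1)).Nonempty := by
        obtain ⟨j, hj⟩ := hall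
        exact ⟨j, by simp [(hω j).resolve_left hj]⟩
      set k := (Finset.univ.filter (fun i => Z i ω = 1)).min' hne with hk
      have hk1 : Z k ω = 1 := by
        have := Finset.min'_mem _ hne
        simpa using this
      have hkmin : ∀ j, Z j ω = 1 → k ≤ j := by
        intro j hj
        exact Finset.min'_le _ _ (by simp [hj])
      have hklt : ∀ j < k, Z j ω = -1 := by
        intro j hj
        rcases hω j with h | h
        · exact h
        · exact absurd (hkmin j h) (not_le.2 hj)
      have hωA : ω ∈ A k := (hAmem k ω).2 ⟨hk1, hklt⟩
      have hsup : (⨆ i, Z i ω * y i) = y k := by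
        apply le_antisymm
        · refine ciSup_le fun i => ?_
          rcases hω i with h | h
          · rw [h, neg_one_mul]
            exact le_trans (neg_nonpos.2 (hy0 i)) (hy0 k)
          · rw [h, one_mul]
            exact hy (hkmin i h)
        · have := le_ciSup hbdd k
          rwa [hk1, one_mul] at this
      have hnB : ω ∉ B := by
        intro hωB
        have := (hBmem ω).1 hωB k
        rw [hk1] at this; norm_num at this
      have hsum0 : (∑ k', (A k').indicator (fun _ => y k') ω) = y k := by
        rw [Finset.sum_eq_single k]
        · exact Set.indicator_of_mem hωA _
        · intro k' _ hk'
          refine Set.indicator_of_notMem ?_ _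
          intro hωA'
          obtain ⟨h1', h2'⟩ := (hAmem k' ω).1 hωA'
          rcases lt_or_gt_of_ne hk' with h | h
          · exact absurd (hkmin k' h1') (not_le.2 h)
          · have := h2' k h
            rw [hk1] at this; norm_num at this
        · intro h; exact absurd (Finset.mem_univ k) h
      rw [hsup]
      simp only [hf]
      rw [Set.indicator_of_notMem hnB, add_zero, hsum0]
  -- compute the integral
  have hintA : ∀ k, Integrable ((A k).indicator (fun _ => y k)) P :=
    fun k => (integrable_const _).indicator (hAmeas k)
  have hintB : Integrable (B.indicator (fun _ => -(y (Fin.last m)))) P :=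
    (integrable_const _).indicator hBmeas
  rw [integral_congr_ae hae, hf,
    integral_add (integrable_finset_sum _ (fun k _ => hintA k)) hintB,
    integral_finset_sum _ (fun k _ => hintA k)]
  simp_rw [integral_indicator_const _ (hAmeas _), integral_indicator_const _ hBmeas]
  have htoA : ∀ k : Fin (m+1), (P (A k)).toReal = (2⁻¹ : ℝ) ^ ((k : ℕ) + 1) := by
    intro k
    rw [hPA k]
    simp [ENNReal.toReal_pow, ENNReal.toReal_inv]
  have htoB : (P B).toReal = (2⁻¹ : ℝ) ^ (m + 1) := by
    rw [hPB]
    simp [ENNReal.toReal_pow, ENNReal.toReal_inv]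
  simp_rw [measureReal_def, htoA, htoB, smul_eq_mul]
  -- arithmetic
  rw [Fin.sum_univ_castSucc (f := fun k : Fin (m+1) => (2⁻¹ : ℝ) ^ ((k : ℕ) + 1) * y k)]
  have hlast : ((Fin.last m : Fin (m+1)) : ℕ) = m := rfl
  rw [hlast]
  have hcast : ∀ k : Fin ((m+1) - 1), Fin.castLE (Nat.sub_le (m+1) 1) k
      = Fin.castSucc (k : Fin m) := by
    intro k
    rfl
  have hsum : ∀ k : Fin m, ((Fin.castSucc k : Fin (m+1)) : ℕ) = (k : ℕ) := fun k => rfl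
  have hrhs : ∀ k : Fin ((m+1)-1), (2 : ℝ) ^ (-((k : ℕ) : ℤ) - 1) = (2⁻¹ : ℝ) ^ ((k : ℕ) + 1) := by
    intro k
    rw [show (-((k : ℕ) : ℤ) - 1) = -(((k : ℕ) + 1 : ℕ) : ℤ) by push_cast; ring,
      zpow_neg, zpow_natCast, ← inv_pow]
  have hR : (∑ k : Fin ((m+1) - 1), (2 : ℝ) ^ (-((k : ℕ) : ℤ) - 1)
        * y (Fin.castLE (Nat.sub_le (m+1) 1) k))
      = ∑ k : Fin m, (2⁻¹ : ℝ) ^ ((k : ℕ) + 1) * y (Fin.castSucc k) := by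
    refine Finset.sum_congr rfl fun k _ => ?_
    rw [hrhs k, hcast k]
  rw [hR]
  simp only [Fin.coe_castSucc]
  ring
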